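/- Let n, t, w, M be positive integers with t < n and w < n. If M > ∑_{i=w+1}^{n} C(n, i) and there exists an (n,t)-cooling code of size M, then there exists an (n, t, w)-low-power cooling (LPC) code of size at least M − ∑_{i=w+1}^{n} C(n, i). -/

import Mathlib

/-- An `(n,t)`-cooling code of size `M` over coefficients `F`: `M` pairwise disjoint
subsets (codesets) of `F^n` such that for every `t`-subset `S` of coordinates and every
codeset, some vector in the codeset has support disjoint from `S`. -/
def IsCoolingCode (F : Type*) [Zero F] (n t M : ℕ)
    (C : Fin M → Set (Fin n → F)) : Prop :=
  (∀ i j : Fin M, i ≠ j → Disjoint (C i) (C j)) ∧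
  ∀ S : Finset (Fin n), S.card = t → ∀ i : Fin M,
    ∃ x ∈ C i, ∀ j ∈ S, x j = 0

/-- An `(n,t,w)`-low-power cooling code of size `M`: `M` pairwise disjoint subsets of
`F_2^n`, every vector in every codeset has Hamming weight at most `w`, and for every
`t`-subset `S` of coordinates and every codeset, some vector in the codeset has
support disjoint from `S`. -/
def IsLPCCode (n t w M : ℕ) (C : Fin M → Set (Fin n → ZMod 2)) : Prop :=
  (∀ i j : Fin M, i ≠ j → Disjoint (C i) (C j)) ∧
  (∀ i : Fin M, ∀ x ∈ C i, hammingNorm x ≤ w) ∧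
  ∀ S : Finset (Fin n), S.card = t → ∀ i : Fin M,
    ∃ x ∈ C i, ∀ j ∈ S, x j = 0

lemma finset_heavy_card (n w : ℕ) :
    (Finset.univ.filter fun s : Finset (Fin n) => w < s.card).card
      = ∑ i ∈ Finset.Icc (w + 1) n, n.choose i := by
  have h : (Finset.univ.filter fun s : Finset (Fin n) => w < s.card)
      = (Finset.Icc (w + 1) n).biUnion
        (fun k => Finset.powersetCard k Finset.univ) := by
    ext s
    simp only [Finset.mem_filter, Finset.mem_univ, true_and, Finset.mem_biUnion,
      Finset.mem_Icc, Finset.mem_powersetCard]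
    constructor
    · intro hs
      exact ⟨s.card, ⟨hs, by simpa using Finset.card_le_univ s⟩, s.subset_univ, rfl⟩
    · rintro ⟨k, ⟨hk, -⟩, -, rfl⟩; exact hk
  rw [h, Finset.card_biUnion]
  · refine Finset.sum_congr rfl fun k _ => ?_
    simp [Finset.card_powersetCard]
  · intro a _ b _ hab
    simp only [Finset.disjoint_left, Finset.mem_powersetCard]
    rintro s ⟨-, rfl⟩ ⟨-, h⟩
    exact hab h

lemma zmod2_ne_zero : ∀ a : ZMod 2, a ≠ 0 → a = 1 := by decide

lemma heavy_card (n w : ℕ) :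
    (Finset.univ.filter fun x : Fin n → ZMod 2 => w < hammingNorm x).card
      = ∑ i ∈ Finset.Icc (w + 1) n, n.choose i := by
  rw [← finset_heavy_card n w]
  refine Finset.card_bij' (fun x _ => Finset.univ.filter fun i => x i ≠ 0)
    (fun s _ => fun i => if i ∈ s then 1 else 0) ?_ ?_ ?_ ?_
  · intro x hx
    simp only [Finset.mem_filter, Finset.mem_univ, true_and] at hx ⊢
    simpa [hammingNorm] using hx
  · intro s hs
    simp only [Finset.mem_filter, Finset.mem_univ, true_and] at hs ⊢
    have h1 : hammingNorm (fun i : Fin n => if i ∈ s then (1 : ZMod 2) else 0)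
        = s.card := by
      unfold hammingNorm
      congr 1
      ext i
      by_cases h : i ∈ s <;> simp [h]
    omega
  · intro x _
    funext i
    simp only [Finset.mem_filter, Finset.mem_univ, true_and]
    by_cases h : x i = 0
    · simp [h]
    · simp [h, (zmod2_ne_zero _ h).symm]
  · intro s _
    ext i
    by_cases h : i ∈ s <;> simp [h]

theorem stmt_19 (n t w M : ℕ) (ht : 0 < t) (htn : t < n) (hw : 0 < w) (hwn : w < n)
    (hM : ∑ i ∈ Finset.Icc (w + 1) n, n.choose i < M)
    (hcool : ∃ C : Fin M → Set (Fin n → ZMod 2), IsCoolingCode (ZMod 2) n t M C) :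
    ∃ M' : ℕ, M - ∑ i ∈ Finset.Icc (w + 1) n, n.choose i ≤ M' ∧
      ∃ D : Fin M' → Set (Fin n → ZMod 2), IsLPCCode n t w M' D := by
  obtain ⟨C, hdisj, hcov⟩ := hcool
  classical
  set B := ∑ i ∈ Finset.Icc (w + 1) n, n.choose i with hB
  set good : Finset (Fin M) :=
    Finset.univ.filter (fun i => ∀ x ∈ C i, hammingNorm x ≤ w) with hgood
  -- bad indices inject into heavy vectors
  have hbadcard : (goodᶜ).card ≤ B := by
    rw [hB, ← heavy_card n w]
    apply Finset.card_le_card_of_injOn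
      (fun i => if h : ∃ x ∈ C i, w < hammingNorm x then h.choose else 0)
    · intro i hi
      simp only [hgood, Finset.mem_coe, Finset.mem_compl, Finset.mem_filter, Finset.mem_univ,
        true_and] at hi
      push_neg at hi
      have h : ∃ x ∈ C i, w < hammingNorm x := hi
      simp only [dif_pos h, Finset.mem_coe, Finset.mem_filter, Finset.mem_univ, true_and]
      exact h.choose_spec.2
    · intro i hi j hj hij
      by_contra hne
      simp only [hgood, Finset.mem_coe, Finset.mem_compl, Finset.mem_filter,
        Finset.mem_univ, true_and] at hi hj
      push_neg at hi hj
      have hie : ∃ x ∈ C i, w < hammingNorm x := hi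
      have hje : ∃ x ∈ C j, w < hammingNorm x := hj
      simp only [dif_pos hie, dif_pos hje] at hij
      exact (Set.disjoint_left.mp (hdisj i j hne)) hie.choose_spec.1
        (hij ▸ hje.choose_spec.1)
  have hgoodcard : M - B ≤ good.card := by
    have := Finset.card_add_card_compl good
    simp only [Fintype.card_fin] at this
    omega
  refine ⟨good.card, hgoodcard, fun k => C (good.equivFin.symm k), ?_, ?_, ?_⟩
  · intro i j hij
    apply hdisj
    intro h
    exact hij (good.equivFin.symm.injective (Subtype.ext h))
  · intro i x hx
    have := (good.equivFin.symm i).2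
    simp only [hgood, Finset.mem_filter, Finset.mem_univ, true_and] at this
    exact this x hx
  · intro S hS i
    exact hcov S hS _
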